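/- Suppose (x1*, z1*) satisfies the first-order conditions (1 − σ)·(p(x1* + x2*) + x1*·p′(x1* + x2*)) = C′(x1*) and q·F′(x1*·p(x1* + x2*) − z1*) = (1 − q)·σ. If in addition F″(x1*·p(x1* + x2*) − z1*) > 0 and 2·p′(x1* + x2*) + x1*·p″(x1* + x2*) − C″(x1*)/(1 − σ) < 0, then the function of two real variables (x1, z1) ↦ P(x1, x2*, z1) has a local maximum at (x1*, z1*). -/

import Mathlib

open Filter Set Topology

lemma contDiff_two_deriv {f : ℝ → ℝ} (hf : ContDiff ℝ 2 f) : ContDiff ℝ 1 (deriv f) := by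
  have h : ContDiff ℝ (1 + 1 : ℕ) f := by exact_mod_cast hf
  exact ((contDiff_succ_iff_deriv).1 (by exact_mod_cast h)).2.2

lemma secondDerivTestMax {f : ℝ → ℝ} {b : ℝ} (hf : ContDiff ℝ 2 f)
    (h1 : deriv f b = 0) (h2 : deriv (deriv f) b < 0) : IsLocalMax f b := by
  have hfd : Differentiable ℝ f := hf.differentiable two_ne_zero
  have hf1 : ContDiff ℝ 1 (deriv f) := contDiff_two_deriv hf
  have hd : HasDerivAt (deriv f) (deriv (deriv f) b) b :=
    ((hf1.differentiable one_ne_zero) b).hasDerivAt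
  have hs := hasDerivAt_iff_tendsto_slope.mp hd
  have hneg : ∀ᶠ x in 𝓝[≠] b, slope (deriv f) b x < 0 :=
    hs.eventually (eventually_lt_nhds h2)
  apply isLocalMax_of_deriv' (hfd.continuous.continuousAt)
    (Eventually.of_forall fun x => hfd x) (Eventually.of_forall fun x => hfd x)
  · have hneg' : ∀ᶠ x in 𝓝[<] b, slope (deriv f) b x < 0 := nhdsLT_le_nhdsNE b hneg
    filter_upwards [hneg', self_mem_nhdsWithin] with x hx hxb
    rw [slope_def_field, h1, sub_zero] at hx
    rcases div_neg_iff.mp hx with ⟨h, _⟩ | ⟨_, h⟩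
    · linarith
    · simp only [mem_Iio] at hxb; linarith
  · have hneg' : ∀ᶠ x in 𝓝[>] b, slope (deriv f) b x < 0 := nhdsGT_le_nhdsNE b hneg
    filter_upwards [hneg', self_mem_nhdsWithin] with x hx hxb
    rw [slope_def_field, h1, sub_zero] at hx
    rcases div_neg_iff.mp hx with ⟨_, h⟩ | ⟨h, _⟩
    · simp only [mem_Ioi] at hxb; linarith
    · linarith



/-- If `(x1*, z1*)` satisfies the first-order conditions and
`F'' > 0` at the relevant point and
`2 p' + x1* p'' - C''/(1-σ) < 0`, then the profit function
`(x1, z1) ↦ P(x1, x2*, z1)` has a local maximum at `(x1*, z1*)`. -/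
theorem stmt_0 (σ q x2s : ℝ) (hσ0 : 0 < σ) (hσ1 : σ < 1) (hq0 : 0 < q) (hq1 : q < 1)
    (p C F : ℝ → ℝ) (hp : ContDiff ℝ 2 p) (hC : ContDiff ℝ 2 C) (hF : ContDiff ℝ 2 F)
    (x1s z1s : ℝ)
    (hfoc1 : (1 - σ) * (p (x1s + x2s) + x1s * deriv p (x1s + x2s)) = deriv C x1s)
    (hfoc2 : q * deriv F (x1s * p (x1s + x2s) - z1s) = (1 - q) * σ)
    (hF2 : 0 < deriv (deriv F) (x1s * p (x1s + x2s) - z1s))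
    (hconc : 2 * deriv p (x1s + x2s) + x1s * deriv (deriv p) (x1s + x2s)
        - deriv (deriv C) x1s / (1 - σ) < 0) :
    IsLocalMax (fun v : ℝ × ℝ =>
      (1 - q * σ) * v.1 * p (v.1 + x2s) - C v.1 - (1 - q) * σ * v.2
        - q * F (v.1 * p (v.1 + x2s) - v.2)) (x1s, z1s) := by
  have hσ : (0:ℝ) < 1 - σ := by linarith
  have hpd : Differentiable ℝ p := hp.differentiable two_ne_zero
  have hCd : Differentiable ℝ C := hC.differentiable two_ne_zero
  have hFd : Differentiable ℝ F := hF.differentiable two_ne_zero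
  have hpd1 : Differentiable ℝ (deriv p) := (contDiff_two_deriv hp).differentiable one_ne_zero
  have hCd1 : Differentiable ℝ (deriv C) := (contDiff_two_deriv hC).differentiable one_ne_zero
  have hFd1 : Differentiable ℝ (deriv F) := (contDiff_two_deriv hF).differentiable one_ne_zero
  set A : ℝ → ℝ := fun x => (1 - σ) * (x * p (x + x2s)) - C x with hAdef
  set B : ℝ → ℝ := fun w => (1 - q) * σ * w - q * F w with hBdef
  set ws : ℝ := x1s * p (x1s + x2s) - z1s with hws
  -- derivative of A
  have hA' : ∀ x : ℝ, HasDerivAt A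
      ((1 - σ) * (p (x + x2s) + x * deriv p (x + x2s)) - deriv C x) x := by
    intro x
    have h1 : HasDerivAt (fun y : ℝ => y + x2s) 1 x := (hasDerivAt_id x).add_const _
    have h2 : HasDerivAt (fun y : ℝ => p (y + x2s)) (deriv p (x + x2s) * 1) x :=
      (hpd (x + x2s)).hasDerivAt.comp x h1
    have h3 : HasDerivAt (fun y : ℝ => y * p (y + x2s))
        (1 * p (x + x2s) + x * (deriv p (x + x2s) * 1)) x := (hasDerivAt_id x).mul h2
    have h4 := (h3.const_mul (1 - σ)).sub (hCd x).hasDerivAt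
    exact h4.congr_deriv (by ring)
  have hderivA : deriv A = fun x =>
      (1 - σ) * (p (x + x2s) + x * deriv p (x + x2s)) - deriv C x :=
    funext fun x => (hA' x).deriv
  -- second derivative of A at x1s
  have hA'' : HasDerivAt (deriv A)
      ((1 - σ) * (2 * deriv p (x1s + x2s) + x1s * deriv (deriv p) (x1s + x2s))
        - deriv (deriv C) x1s) x1s := by
    rw [hderivA]
    have h1 : HasDerivAt (fun y : ℝ => y + x2s) 1 x1s := (hasDerivAt_id x1s).add_const _
    have h2 : HasDerivAt (fun y : ℝ => p (y + x2s)) (deriv p (x1s + x2s) * 1) x1s :=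
      (hpd (x1s + x2s)).hasDerivAt.comp x1s h1
    have h3 : HasDerivAt (fun y : ℝ => deriv p (y + x2s))
        (deriv (deriv p) (x1s + x2s) * 1) x1s :=
      by have := (hpd1 (x1s + x2s)).hasDerivAt.comp x1s h1; exact this
    have h4 : HasDerivAt (fun y : ℝ => y * deriv p (y + x2s))
        (1 * deriv p (x1s + x2s) + x1s * (deriv (deriv p) (x1s + x2s) * 1)) x1s :=
      (hasDerivAt_id x1s).mul h3
    have h5 := ((h2.add h4).const_mul (1 - σ)).sub (hCd1 x1s).hasDerivAt
    exact h5.congr_deriv (by ring)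
  have hACD : ContDiff ℝ 2 A := (contDiff_const.mul ((contDiff_id).mul
      (hp.comp (contDiff_id.add contDiff_const)))).sub hC
  have hAmax : IsLocalMax A x1s := by
    apply secondDerivTestMax hACD
    · rw [hderivA]; simp only; linarith [hfoc1]
    · rw [hA''.deriv]
      have h' : 2 * deriv p (x1s + x2s) + x1s * deriv (deriv p) (x1s + x2s)
          < deriv (deriv C) x1s / (1 - σ) := by linarith
      have := (lt_div_iff₀ hσ).mp h'
      nlinarith
  -- derivative of B
  have hB' : ∀ w : ℝ, HasDerivAt B ((1 - q) * σ - q * deriv F w) w := by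
    intro w
    have h1 : HasDerivAt (fun y : ℝ => (1 - q) * σ * y) ((1 - q) * σ) w := by
      simpa using (hasDerivAt_id w).const_mul ((1 - q) * σ)
    exact h1.sub ((hFd w).hasDerivAt.const_mul q)
  have hderivB : deriv B = fun w => (1 - q) * σ - q * deriv F w :=
    funext fun w => (hB' w).deriv
  have hB'' : HasDerivAt (deriv B) (-(q * deriv (deriv F) ws)) ws := by
    rw [hderivB]
    exact ((hFd1 ws).hasDerivAt.const_mul q).const_sub _
  have hBmax : IsLocalMax B ws := by
    have hBCD : ContDiff ℝ 2 B := (contDiff_const.mul contDiff_id).sub (contDiff_const.mul hF)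
    apply secondDerivTestMax hBCD
    · rw [hderivB]; simp only; linarith [hfoc2]
    · rw [hB''.deriv]; nlinarith
  -- combine
  have hg : ContinuousAt (fun v : ℝ × ℝ => v.1 * p (v.1 + x2s) - v.2) (x1s, z1s) := by
    exact (continuousAt_fst.mul (hpd.continuous.continuousAt.comp
      (continuousAt_fst.add continuousAt_const))).sub continuousAt_snd
  have hEv1 : ∀ᶠ v : ℝ × ℝ in 𝓝 (x1s, z1s), A v.1 ≤ A x1s :=
    (continuous_fst.tendsto (x1s, z1s)).eventually hAmax
  have hEv2 : ∀ᶠ v : ℝ × ℝ in 𝓝 (x1s, z1s), B (v.1 * p (v.1 + x2s) - v.2) ≤ B ws :=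
    hg.eventually hBmax
  filter_upwards [hEv1, hEv2] with v h1 h2
  have key : ∀ a z : ℝ, (1 - q * σ) * a * p (a + x2s) - C a - (1 - q) * σ * z
      - q * F (a * p (a + x2s) - z) = A a + B (a * p (a + x2s) - z) := by
    intro a z; simp only [hAdef, hBdef]; ring
  simp only [key]
  linarith
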